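/- For every α ∈ (0,1) there is a constant C = C(α) > 0 such that for all ξ ≥ 1: ∫₀^∞ f_ξ(t)·sinh(t)·(2·cosh t)^{−α/2} dt ≤ C·ξ^{−α}. -/

import Mathlib

open Matrix MeasureTheory Real Filter Topology
open scoped MatrixGroups Pointwise

noncomputable section

/-- `SL(2,ℝ)` as the special linear group of 2×2 real matrices. -/
abbrev SL2R := Matrix.SpecialLinearGroup (Fin 2) ℝ

instance : TopologicalSpace SL2R :=
  show TopologicalSpace {A : Matrix (Fin 2) (Fin 2) ℝ // A.det = 1} from inferInstance

instance : MeasurableSpace SL2R := borel SL2R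

/-- Squared Frobenius norm `‖g‖² = a² + b² + c² + d²`. -/
def fnormSq (g : SL2R) : ℝ :=
  (g : Matrix (Fin 2) (Fin 2) ℝ) 0 0 ^ 2 + (g : Matrix (Fin 2) (Fin 2) ℝ) 0 1 ^ 2
    + (g : Matrix (Fin 2) (Fin 2) ℝ) 1 0 ^ 2 + (g : Matrix (Fin 2) (Fin 2) ℝ) 1 1 ^ 2

/-- Frobenius norm `‖g‖`. -/
def fnorm (g : SL2R) : ℝ := Real.sqrt (fnormSq g)

/-- The angle `θ_g = arg((g·i − i)/(g·i + i)) ∈ (−π, π]`; equals `0` when `g·i = i`. -/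
def theta (g : SL2R) : ℝ :=
  Complex.arg ((((g • UpperHalfPlane.I : UpperHalfPlane) : ℂ) - Complex.I)
    / (((g • UpperHalfPlane.I : UpperHalfPlane) : ℂ) + Complex.I))

/-- Distance between two angles: the distance from `a − b` to the nearest element of `2πℤ`. -/
def angDist (a b : ℝ) : ℝ := |((a - b : ℝ) : Real.Angle).toReal|

/-- Inverse hyperbolic cosine. -/
def arccosh (x : ℝ) : ℝ := Real.log (x + Real.sqrt (x ^ 2 - 1))

/-- `ℓ(M) = arccosh(‖M‖²/2)`, the hyperbolic distance from `i` to `M·i`. -/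
def ell (M : SL2R) : ℝ := arccosh (fnormSq M / 2)

/-- The pair-correlation density building block `f_ξ(ℓ)`. -/
def fxi (ξ l : ℝ) : ℝ :=
  if Real.sinh l ≤ ξ then 2 / ξ ^ 2 * l
  else if 2 * Real.sinh (l / 2) ≤ ξ then
    2 / ξ ^ 2 * (l + Real.log (1 + ξ ^ 2)
      - 2 * Real.log (Real.cosh l + Real.sqrt (Real.sinh l ^ 2 - ξ ^ 2)))
  else 2 / ξ ^ 2 * (l - Real.log (Real.cosh l + Real.sqrt (Real.sinh l ^ 2 - ξ ^ 2)))

/-- The rotation matrix `k_φ ∈ SL(2,ℝ)`. -/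
def kMat (φ : ℝ) : SL2R :=
  ⟨!![Real.cos (φ / 2), Real.sin (φ / 2); -Real.sin (φ / 2), Real.cos (φ / 2)], by
    rw [Matrix.det_fin_two_of]
    linear_combination Real.sin_sq_add_cos_sq (φ / 2)⟩

/-- The diagonal matrix `a_t ∈ SL(2,ℝ)`. -/
def aMat (t : ℝ) : SL2R :=
  ⟨!![Real.exp (t / 2), 0; 0, Real.exp (-t / 2)], by
    rw [Matrix.det_fin_two_of, ← Real.exp_add]
    norm_num
    ring⟩

lemma my_le_exp (x : ℝ) : x ≤ Real.exp x := by linarith [Real.add_one_le_exp x]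

lemma my_exp_le_two_cosh (t : ℝ) : Real.exp t ≤ 2 * Real.cosh t := by
  rw [Real.cosh_eq]; linarith [Real.exp_pos (-t)]

lemma my_rpow_cosh_le {α : ℝ} (hα : 0 ≤ α) (t : ℝ) :
    (2 * Real.cosh t) ^ (-(α/2)) ≤ Real.exp (-(α/2)*t) := by
  have h1 : (2 * Real.cosh t) ^ (-(α/2)) ≤ (Real.exp t) ^ (-(α/2)) :=
    Real.rpow_le_rpow_of_nonpos (Real.exp_pos t) (my_exp_le_two_cosh t) (by linarith)
  calc (2 * Real.cosh t) ^ (-(α/2)) ≤ (Real.exp t) ^ (-(α/2)) := h1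
    _ = Real.exp (-(α/2)*t) := by rw [← Real.exp_mul]; ring_nf

lemma my_integral_exp_neg_mul {b : ℝ} (hb : 0 < b) :
    ∫ x in Set.Ioi (0:ℝ), Real.exp (-b*x) = 1/b := by
  have := MeasureTheory.integral_comp_mul_left_Ioi (fun y => Real.exp (-y)) 0 hb
  simp only [mul_zero] at this
  rw [show (fun x => Real.exp (-b*x)) = (fun x => Real.exp (-(b*x))) by ext x; ring_nf]
  rw [this, integral_exp_neg_Ioi_zero, smul_eq_mul, mul_one, one_div]

lemma my_integral_exp_mul (c a b : ℝ) (hc : c ≠ 0) :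
    ∫ t in a..b, Real.exp (c*t) = (Real.exp (c*b) - Real.exp (c*a))/c := by
  have hd : ∀ x : ℝ, HasDerivAt (fun t => Real.exp (c*t)/c) (Real.exp (c*x)) x := by
    intro x
    have h1 : HasDerivAt (fun t : ℝ => c*t) c x := by simpa using (hasDerivAt_id x).const_mul c
    have := (h1.exp).div_const c
    simpa [mul_div_assoc, mul_comm, mul_div_cancel_left₀ _ hc] using this
  rw [intervalIntegral.integral_eq_sub_of_hasDerivAt (fun x _ => hd x)
    ((Real.continuous_exp.comp (continuous_const.mul continuous_id)).intervalIntegrable a b)]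
  ring

lemma fxi_tail_core (ξ t : ℝ) (hξ : 1 ≤ ξ) (ht : 0 < t) (h1 : ξ < Real.sinh t) :
    t - Real.log (Real.cosh t + Real.sqrt (Real.sinh t^2 - ξ^2))
      ≤ ξ^2/(Real.cosh t * Real.sinh t) := by
  have hξ0 : (0:ℝ) < ξ := by linarith
  set A := Real.cosh t with hAdef
  set B := Real.sinh t with hBdef
  set S := Real.sqrt (B^2 - ξ^2) with hSdef
  have hB0 : 0 < B := lt_trans hξ0 h1
  have hS2 : S^2 = B^2 - ξ^2 := Real.sq_sqrt (by nlinarith)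
  have hS0 : 0 ≤ S := Real.sqrt_nonneg _
  have hSB : S ≤ B := by nlinarith
  have hA1 : 1 ≤ A := Real.one_le_cosh t
  have hA0 : (0:ℝ) < A := by linarith
  have hAS : 0 < A + S := by linarith
  have hAB : A + B = Real.exp t := Real.cosh_add_sinh t
  have ht' : t = Real.log (A + B) := by rw [hAB, Real.log_exp]
  have hlog : Real.log (A+B) - Real.log (A+S) = Real.log ((A+B)/(A+S)) := by
    rw [Real.log_div (by linarith) (by linarith)]
  have hle : Real.log ((A+B)/(A+S)) ≤ (A+B)/(A+S) - 1 :=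
    Real.log_le_sub_one_of_pos (by positivity)
  have heq : (A+B)/(A+S) - 1 = (B-S)/(A+S) := by field_simp; ring
  have hBS : (B - S)*(B+S) = ξ^2 := by nlinarith
  have hfin : (B-S)/(A+S) ≤ ξ^2/(A*B) := by
    rw [div_le_div_iff₀ hAS (by positivity)]
    have h7 : 0 ≤ (B - S) * (B*S + S*A + S^2) := mul_nonneg (by linarith) (by positivity)
    calc (B-S)*(A*B) ≤ ((B-S)*(B+S))*(A+S) := by nlinarith [h7]
      _ = ξ^2*(A+S) := by rw [hBS]
  rw [ht', hlog]
  calc Real.log ((A+B)/(A+S)) ≤ (A+B)/(A+S) - 1 := hle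
    _ = (B-S)/(A+S) := heq
    _ ≤ ξ^2/(A*B) := hfin

lemma fxi_mid_core (ξ t : ℝ) (hξ : 1 ≤ ξ) (ht : 0 < t) (h1 : ξ < Real.sinh t) :
    Real.log (1+ξ^2) - Real.log (Real.cosh t + Real.sqrt (Real.sinh t^2 - ξ^2))
      ≤ Real.log (4*(1+ξ^2)) - t := by
  have hξ0 : (0:ℝ) < ξ := by linarith
  set A := Real.cosh t with hAdef
  set B := Real.sinh t with hBdef
  set S := Real.sqrt (B^2 - ξ^2) with hSdef
  have hB0 : 0 < B := lt_trans hξ0 h1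
  have hS0 : 0 ≤ S := Real.sqrt_nonneg _
  have hA1 : 1 ≤ A := Real.one_le_cosh t
  have hBA : B ≤ A := by
    have h := Real.cosh_sub_sinh t
    have h2 := Real.exp_pos (-t)
    linarith
  have hAB : A + B = Real.exp t := Real.cosh_add_sinh t
  have hL : Real.log (4*(1+ξ^2)) = Real.log 4 + Real.log (1+ξ^2) :=
    Real.log_mul (by norm_num) (by positivity)
  have h5 : t ≤ Real.log 4 + Real.log (A+S) := by
    have ht' : t = Real.log (A + B) := by rw [hAB, Real.log_exp]
    have h6 : Real.log 4 + Real.log (A+S) = Real.log (4*(A+S)) :=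
      (Real.log_mul (by norm_num) (by positivity)).symm
    rw [ht', h6]
    apply Real.log_le_log (by positivity)
    linarith
  linarith

lemma fxi_pointwise (α ξ t : ℝ) (hα0 : 0 < α) (hα1 : α < 1) (hξ : 1 ≤ ξ) (ht : 0 < t) :
    fxi ξ t * Real.sinh t * (2 * Real.cosh t) ^ (-(α/2)) ≤
      (8/(α*ξ)) * Real.exp (-(α/4)*t) + 4 * ξ^(-α) * Real.exp (-((1-α/2)*t))
      + Set.indicator (Set.Ioc 0 (Real.log (4*(1+ξ^2))))
          (fun s => (2/((1-α/2)*ξ^2)) * Real.exp ((1-α/2) * Real.log (4*(1+ξ^2)) / 2)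
            * Real.exp ((1-α/2)*s/2)) t := by
  have hξ0 : (0:ℝ) < ξ := by linarith
  have hβ0 : 0 < 1 - α/2 := by linarith
  set β := 1 - α/2 with hβdef
  set L := Real.log (4*(1+ξ^2)) with hLdef
  set P := (2 * Real.cosh t) ^ (-(α/2)) with hPdef
  have hA0 : 0 < Real.cosh t := Real.cosh_pos t
  have hP0 : 0 < P := Real.rpow_pos_of_pos (by linarith) _
  have hPle : P ≤ Real.exp (-(α/2)*t) := my_rpow_cosh_le hα0.le t
  have hB0' : 0 < Real.sinh t := Real.sinh_pos_iff.2 ht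
  have hI3 : 0 ≤ Set.indicator (Set.Ioc 0 L)
      (fun s => (2/(β*ξ^2)) * Real.exp (β * L / 2) * Real.exp (β*s/2)) t :=
    Set.indicator_nonneg (fun s _ => by positivity) t
  have hG2 : 0 ≤ 4 * ξ^(-α) * Real.exp (-(β*t)) := by positivity
  have hG1 : 0 ≤ (8/(α*ξ)) * Real.exp (-(α/4)*t) := by positivity
  -- first-term bound used in cases 2 and 3
  have hBA : Real.sinh t ≤ Real.cosh t := by
    have h := Real.cosh_sub_sinh t
    have h2 := Real.exp_pos (-t)
    linarith
  have hAB : Real.cosh t + Real.sinh t = Real.exp t := Real.cosh_add_sinh t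
  rw [fxi]
  split_ifs with h1 h2
  · -- case 1 : sinh t ≤ ξ
    have key : t * Real.exp (-(α/2)*t) ≤ (4/α) * Real.exp (-(α/4)*t) := by
      have h4 : t ≤ 4/α * Real.exp (α/4*t) := by
        have h5 := my_le_exp (α/4*t)
        calc t = (4/α) * (α/4*t) := by field_simp
          _ ≤ 4/α * Real.exp (α/4*t) := by
            apply mul_le_mul_of_nonneg_left h5 (by positivity)
      calc t * Real.exp (-(α/2)*t) ≤ (4/α * Real.exp (α/4*t)) * Real.exp (-(α/2)*t) := by
            apply mul_le_mul_of_nonneg_right h4 (Real.exp_pos _).le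
        _ = (4/α) * (Real.exp (α/4*t) * Real.exp (-(α/2)*t)) := by ring
        _ = (4/α) * Real.exp (-(α/4)*t) := by rw [← Real.exp_add]; ring_nf
    have step1 : 2 / ξ^2 * t * Real.sinh t * P ≤ 2 / ξ^2 * t * ξ * Real.exp (-(α/2)*t) := by
      have h0 : 0 ≤ 2/ξ^2 * t := by positivity
      calc 2 / ξ^2 * t * Real.sinh t * P ≤ 2 / ξ^2 * t * ξ * P := by
            apply mul_le_mul_of_nonneg_right (mul_le_mul_of_nonneg_left h1 h0) hP0.le
        _ ≤ 2 / ξ^2 * t * ξ * Real.exp (-(α/2)*t) := by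
            apply mul_le_mul_of_nonneg_left hPle (by positivity)
    have step2 : 2 / ξ^2 * t * ξ * Real.exp (-(α/2)*t) ≤ (8/(α*ξ)) * Real.exp (-(α/4)*t) := by
      have he : 2 / ξ^2 * t * ξ * Real.exp (-(α/2)*t) = (2/ξ) * (t * Real.exp (-(α/2)*t)) := by
        field_simp
      rw [he]
      calc (2/ξ) * (t * Real.exp (-(α/2)*t)) ≤ (2/ξ) * ((4/α) * Real.exp (-(α/4)*t)) := by
            apply mul_le_mul_of_nonneg_left key (by positivity)
        _ = (8/(α*ξ)) * Real.exp (-(α/4)*t) := by field_simp; ring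
    linarith
  · -- case 2 : middle branch
    push_neg at h1
    have hT1 := fxi_tail_core ξ t hξ ht h1
    have hT2 := fxi_mid_core ξ t hξ ht h1
    rw [← hLdef] at hT2
    set Q := Real.log (Real.cosh t + Real.sqrt (Real.sinh t^2 - ξ^2)) with hQdef
    set M := max 0 (L - t) with hMdef
    have hM0 : (0:ℝ) ≤ M := le_max_left _ _
    have hξet : ξ ≤ Real.exp t := by linarith [Real.one_le_cosh t]
    have hfirst : (2/Real.cosh t)*P ≤ 4*ξ^(-α)*Real.exp (-(β*t)) := by
      have h2A : 2/Real.cosh t ≤ 4*Real.exp (-t) := by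
        have h4 : (4:ℝ)*Real.exp (-t) = 4/Real.exp t := by rw [Real.exp_neg]; ring
        rw [h4, div_le_div_iff₀ hA0 (Real.exp_pos t)]
        linarith
      have hexpa : Real.exp (-(α*t)) ≤ ξ^(-α) := by
        have h5 := Real.rpow_le_rpow_of_nonpos hξ0 hξet (neg_nonpos.2 hα0.le)
        calc Real.exp (-(α*t)) = (Real.exp t)^(-α) := by rw [← Real.exp_mul]; ring_nf
          _ ≤ ξ^(-α) := h5
      have hmul : Real.exp (-t) * Real.exp (-(α/2)*t)
          = Real.exp (-(α*t)) * Real.exp (-(β*t)) := by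
        rw [← Real.exp_add, ← Real.exp_add, hβdef]; congr 1; ring
      calc (2/Real.cosh t)*P ≤ (4*Real.exp (-t)) * Real.exp (-(α/2)*t) :=
            mul_le_mul h2A hPle hP0.le (by positivity)
        _ = 4 * (Real.exp (-(α*t)) * Real.exp (-(β*t))) := by rw [← hmul]; ring
        _ ≤ 4 * (ξ^(-α) * Real.exp (-(β*t))) := by
            apply mul_le_mul_of_nonneg_left
              (mul_le_mul_of_nonneg_right hexpa (Real.exp_pos _).le) (by norm_num)
        _ = 4*ξ^(-α)*Real.exp (-(β*t)) := by ring
    have hsecond : 2/ξ^2*M*(Real.sinh t*P) ≤ Set.indicator (Set.Ioc 0 L)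
        (fun s => (2/(β*ξ^2)) * Real.exp (β * L / 2) * Real.exp (β*s/2)) t := by
      have hBP : Real.sinh t * P ≤ (1/2)*Real.exp (β*t) := by
        have hBe : Real.sinh t ≤ Real.exp t / 2 := by linarith
        calc Real.sinh t * P ≤ (Real.exp t/2) * Real.exp (-(α/2)*t) :=
              mul_le_mul hBe hPle hP0.le (by positivity)
          _ = (1/2)*Real.exp (β*t) := by
              rw [div_mul_eq_mul_div, ← Real.exp_add,
                show t + -(α/2)*t = β*t by rw [hβdef]; ring]
              ring
      by_cases hL : t ≤ L
      · rw [Set.indicator_of_mem (Set.mem_Ioc.mpr ⟨ht, hL⟩)]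
        have hMval : M = L - t := max_eq_right (by linarith)
        have hLt : L - t ≤ (2/β)*Real.exp (β*(L-t)/2) := by
          have h5 := my_le_exp (β*(L-t)/2)
          calc L - t = (2/β)*(β*(L-t)/2) := by field_simp
            _ ≤ (2/β)*Real.exp (β*(L-t)/2) := mul_le_mul_of_nonneg_left h5 (by positivity)
        have hexpeq : Real.exp (β*(L-t)/2) * Real.exp (β*t)
            = Real.exp (β*L/2) * Real.exp (β*t/2) := by
          rw [← Real.exp_add, ← Real.exp_add]; congr 1; ring
        calc 2/ξ^2*M*(Real.sinh t*P) ≤ 2/ξ^2*M*((1/2)*Real.exp (β*t)) := by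
              apply mul_le_mul_of_nonneg_left hBP (mul_nonneg (by positivity) hM0)
          _ = 2/ξ^2*(L-t)*((1/2)*Real.exp (β*t)) := by rw [hMval]
          _ ≤ 2/ξ^2*((2/β)*Real.exp (β*(L-t)/2))*((1/2)*Real.exp (β*t)) := by
              apply mul_le_mul_of_nonneg_right
                (mul_le_mul_of_nonneg_left hLt (by positivity)) (by positivity)
          _ = (2/(β*ξ^2)) * (Real.exp (β*(L-t)/2) * Real.exp (β*t)) := by
              field_simp
          _ = (2/(β*ξ^2)) * Real.exp (β*L/2) * Real.exp (β*t/2) := by rw [hexpeq]; ring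
      · push_neg at hL
        have hMval : M = 0 := max_eq_left (by linarith)
        rw [hMval]
        simpa using hI3
    have hfxi : 2/ξ^2*(t + Real.log (1+ξ^2) - 2*Q)
        ≤ 2/(Real.cosh t*Real.sinh t) + 2/ξ^2 * M := by
      have hsum : t + Real.log (1+ξ^2) - 2*Q ≤ ξ^2/(Real.cosh t*Real.sinh t) + M := by
        have hmax : L - t ≤ M := le_max_right _ _
        linarith
      calc 2/ξ^2*(t + Real.log (1+ξ^2) - 2*Q)
          ≤ 2/ξ^2*(ξ^2/(Real.cosh t*Real.sinh t) + M) :=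
            mul_le_mul_of_nonneg_left hsum (by positivity)
        _ = 2/(Real.cosh t*Real.sinh t) + 2/ξ^2*M := by
            field_simp
    calc 2/ξ^2*(t + Real.log (1+ξ^2) - 2*Q) * Real.sinh t * P
        = (2/ξ^2*(t + Real.log (1+ξ^2) - 2*Q)) * (Real.sinh t * P) := by ring
      _ ≤ (2/(Real.cosh t*Real.sinh t) + 2/ξ^2*M) * (Real.sinh t*P) :=
          mul_le_mul_of_nonneg_right hfxi (by positivity)
      _ = (2/Real.cosh t)*P + 2/ξ^2*M*(Real.sinh t*P) := by
          field_simp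
      _ ≤ 4*ξ^(-α)*Real.exp (-(β*t)) + Set.indicator (Set.Ioc 0 L)
            (fun s => (2/(β*ξ^2)) * Real.exp (β * L / 2) * Real.exp (β*s/2)) t :=
          add_le_add hfirst hsecond
      _ ≤ (8/(α*ξ)) * Real.exp (-(α/4)*t) + 4 * ξ^(-α) * Real.exp (-(β*t))
          + Set.indicator (Set.Ioc 0 L)
            (fun s => (2/(β*ξ^2)) * Real.exp (β * L / 2) * Real.exp (β*s/2)) t := by
          linarith
  · -- case 3 : tail branch
    push_neg at h1
    have hT1 := fxi_tail_core ξ t hξ ht h1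
    set Q := Real.log (Real.cosh t + Real.sqrt (Real.sinh t^2 - ξ^2)) with hQdef
    have hξet : ξ ≤ Real.exp t := by linarith [Real.one_le_cosh t]
    have hfirst : (2/Real.cosh t)*P ≤ 4*ξ^(-α)*Real.exp (-(β*t)) := by
      have h2A : 2/Real.cosh t ≤ 4*Real.exp (-t) := by
        have h4 : (4:ℝ)*Real.exp (-t) = 4/Real.exp t := by rw [Real.exp_neg]; ring
        rw [h4, div_le_div_iff₀ hA0 (Real.exp_pos t)]
        linarith
      have hexpa : Real.exp (-(α*t)) ≤ ξ^(-α) := by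
        have h5 := Real.rpow_le_rpow_of_nonpos hξ0 hξet (neg_nonpos.2 hα0.le)
        calc Real.exp (-(α*t)) = (Real.exp t)^(-α) := by rw [← Real.exp_mul]; ring_nf
          _ ≤ ξ^(-α) := h5
      have hmul : Real.exp (-t) * Real.exp (-(α/2)*t)
          = Real.exp (-(α*t)) * Real.exp (-(β*t)) := by
        rw [← Real.exp_add, ← Real.exp_add, hβdef]; congr 1; ring
      calc (2/Real.cosh t)*P ≤ (4*Real.exp (-t)) * Real.exp (-(α/2)*t) :=
            mul_le_mul h2A hPle hP0.le (by positivity)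
        _ = 4 * (Real.exp (-(α*t)) * Real.exp (-(β*t))) := by rw [← hmul]; ring
        _ ≤ 4 * (ξ^(-α) * Real.exp (-(β*t))) := by
            apply mul_le_mul_of_nonneg_left
              (mul_le_mul_of_nonneg_right hexpa (Real.exp_pos _).le) (by norm_num)
        _ = 4*ξ^(-α)*Real.exp (-(β*t)) := by ring
    have hfxi : 2/ξ^2*(t - Q) ≤ 2/(Real.cosh t*Real.sinh t) := by
      calc 2/ξ^2*(t - Q) ≤ 2/ξ^2*(ξ^2/(Real.cosh t*Real.sinh t)) :=
            mul_le_mul_of_nonneg_left hT1 (by positivity)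
        _ = 2/(Real.cosh t*Real.sinh t) := by field_simp
    have hmain : 2/ξ^2*(t - Q) * Real.sinh t * P ≤ 4*ξ^(-α)*Real.exp (-(β*t)) := by
      calc 2/ξ^2*(t - Q) * Real.sinh t * P = (2/ξ^2*(t - Q)) * (Real.sinh t * P) := by ring
        _ ≤ (2/(Real.cosh t*Real.sinh t)) * (Real.sinh t*P) :=
            mul_le_mul_of_nonneg_right hfxi (by positivity)
        _ = (2/Real.cosh t)*P := by field_simp
        _ ≤ 4*ξ^(-α)*Real.exp (-(β*t)) := hfirst
    linarith


/-- Lemma 2.8, (2.18): `∫₀^∞ f_ξ(t) sinh t (2 cosh t)^{−α/2} dt ≪_α ξ^{−α}`. -/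
theorem fxi_weighted_integral_bound (α : ℝ) (hα0 : 0 < α) (hα1 : α < 1) :
    ∃ C > (0:ℝ), ∀ ξ : ℝ, 1 ≤ ξ →
      (∫ t in Set.Ioi (0:ℝ), fxi ξ t * Real.sinh t * (2 * Real.cosh t) ^ (-(α / 2)))
        ≤ C * ξ ^ (-α) := by
  have hβ0 : 0 < 1 - α/2 := by linarith
  have hC0 : (0:ℝ) < 32/α^2 + 4/(1-α/2) + 32/(1-α/2)^2 := by
    have h1 : (0:ℝ) < 32/α^2 := by positivity
    have h2 : (0:ℝ) < 4/(1-α/2) := div_pos (by norm_num) hβ0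
    have h3 : (0:ℝ) < 32/(1-α/2)^2 := div_pos (by norm_num) (by positivity)
    linarith
  refine ⟨32/α^2 + 4/(1-α/2) + 32/(1-α/2)^2, hC0, ?_⟩
  intro ξ hξ
  have hξ0 : (0:ℝ) < ξ := by linarith
  have hrp : (0:ℝ) ≤ ξ ^ (-α) := Real.rpow_nonneg hξ0.le _
  by_cases hF : IntegrableOn
      (fun t => fxi ξ t * Real.sinh t * (2 * Real.cosh t) ^ (-(α / 2))) (Set.Ioi 0) volume
  · set β := 1 - α/2 with hβdef
    set L := Real.log (4*(1+ξ^2)) with hLdef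
    have hL0 : (0:ℝ) ≤ L := Real.log_nonneg (by nlinarith)
    -- integrability of the three bounding pieces
    have hint1 : IntegrableOn (fun t : ℝ => (8/(α*ξ)) * Real.exp (-(α/4)*t)) (Set.Ioi 0) :=
      (exp_neg_integrableOn_Ioi 0 (show (0:ℝ) < α/4 by positivity)).const_mul _
    have hint2 : IntegrableOn (fun t : ℝ => 4*ξ^(-α)*Real.exp (-(β*t))) (Set.Ioi 0) := by
      have := (exp_neg_integrableOn_Ioi 0 hβ0).const_mul (4*ξ^(-α))
      simpa [neg_mul, IntegrableOn] using this
    have hcont : Continuous (fun s : ℝ => (2/(β*ξ^2)) * Real.exp (β*L/2) * Real.exp (β*s/2)) := by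
      fun_prop
    have hint3 : IntegrableOn (fun t : ℝ => Set.indicator (Set.Ioc 0 L)
        (fun s => (2/(β*ξ^2)) * Real.exp (β*L/2) * Real.exp (β*s/2)) t) (Set.Ioi 0) :=
      ((hcont.integrableOn_Ioc).integrable_indicator measurableSet_Ioc).integrableOn
    have hint12 : IntegrableOn (fun t : ℝ => (8/(α*ξ)) * Real.exp (-(α/4)*t)
        + 4*ξ^(-α)*Real.exp (-(β*t))) (Set.Ioi 0) := hint1.add hint2
    have hintH : IntegrableOn (fun t : ℝ => (8/(α*ξ)) * Real.exp (-(α/4)*t)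
        + 4*ξ^(-α)*Real.exp (-(β*t))
        + Set.indicator (Set.Ioc 0 L)
            (fun s => (2/(β*ξ^2)) * Real.exp (β*L/2) * Real.exp (β*s/2)) t) (Set.Ioi 0) :=
      hint12.add hint3
    have hmono := MeasureTheory.setIntegral_mono_on hF hintH
      measurableSet_Ioi
      (fun t ht => fxi_pointwise α ξ t hα0 hα1 hξ (Set.mem_Ioi.mp ht))
    have hsplit : (∫ t in Set.Ioi (0:ℝ), ((8/(α*ξ)) * Real.exp (-(α/4)*t)
          + 4*ξ^(-α)*Real.exp (-(β*t))
          + Set.indicator (Set.Ioc 0 L)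
              (fun s => (2/(β*ξ^2)) * Real.exp (β*L/2) * Real.exp (β*s/2)) t))
        = (∫ t in Set.Ioi (0:ℝ), (8/(α*ξ)) * Real.exp (-(α/4)*t))
          + (∫ t in Set.Ioi (0:ℝ), 4*ξ^(-α)*Real.exp (-(β*t)))
          + (∫ t in Set.Ioi (0:ℝ), Set.indicator (Set.Ioc 0 L)
              (fun s => (2/(β*ξ^2)) * Real.exp (β*L/2) * Real.exp (β*s/2)) t) := by
      rw [MeasureTheory.integral_add hint12 hint3,
        MeasureTheory.integral_add hint1 hint2]
    have e1 : (∫ t in Set.Ioi (0:ℝ), (8/(α*ξ)) * Real.exp (-(α/4)*t)) = 32/(α^2*ξ) := by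
      rw [MeasureTheory.integral_const_mul, my_integral_exp_neg_mul (show (0:ℝ) < α/4 by positivity)]
      field_simp
      ring
    have e2 : (∫ t in Set.Ioi (0:ℝ), 4*ξ^(-α)*Real.exp (-(β*t))) = 4*ξ^(-α)/β := by
      rw [MeasureTheory.integral_const_mul]
      simp_rw [← neg_mul]
      rw [my_integral_exp_neg_mul hβ0]
      ring
    have e3 : (∫ t in Set.Ioi (0:ℝ), Set.indicator (Set.Ioc 0 L)
          (fun s => (2/(β*ξ^2)) * Real.exp (β*L/2) * Real.exp (β*s/2)) t)
        = (2/(β*ξ^2)) * Real.exp (β*L/2)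
            * ((Real.exp ((β/2)*L) - Real.exp ((β/2)*0))/(β/2)) := by
      rw [MeasureTheory.setIntegral_indicator measurableSet_Ioc,
        Set.inter_eq_self_of_subset_right Set.Ioc_subset_Ioi_self,
        ← intervalIntegral.integral_of_le hL0,
        intervalIntegral.integral_const_mul]
      simp_rw [show ∀ s : ℝ, β*s/2 = (β/2)*s from fun s => by ring]
      rw [my_integral_exp_mul (β/2) 0 L (by positivity)]
    have hb1 : 32/(α^2*ξ) ≤ 32/α^2 * ξ^(-α) := by
      have h1ξ : ξ^(-(1:ℝ)) ≤ ξ^(-α) := Real.rpow_le_rpow_of_exponent_le hξ (by linarith)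
      have h2 : ξ^(-(1:ℝ)) = 1/ξ := by rw [Real.rpow_neg_one, one_div]
      calc 32/(α^2*ξ) = (32/α^2)*(1/ξ) := by ring
        _ ≤ (32/α^2)*ξ^(-α) := by
            rw [← h2]; exact mul_le_mul_of_nonneg_left h1ξ (by positivity)
    have hb2 : 4*ξ^(-α)/β = (4/β)*ξ^(-α) := by ring
    have hb3 : (2/(β*ξ^2))*Real.exp (β*L/2)
          *((Real.exp ((β/2)*L) - Real.exp ((β/2)*0))/(β/2)) ≤ (32/β^2)*ξ^(-α) := by
      set E := Real.exp (β*L/2) with hEdef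
      have hE0 : 0 < E := Real.exp_pos _
      have hEe : Real.exp ((β/2)*L) = E := by rw [hEdef]; congr 1; ring
      have hE02 : Real.exp ((β/2)*0) = 1 := by norm_num
      have hexpL : Real.exp (β*L) ≤ 8 * (ξ^2 * ξ^(-α)) := by
        have h1 : Real.exp (β*L) = (4*(1+ξ^2))^β := by
          rw [Real.rpow_def_of_pos (by positivity), hLdef]; congr 1; ring
        have h2 : ((4:ℝ)*(1+ξ^2))^β ≤ (8*ξ^2)^β :=
          Real.rpow_le_rpow (by positivity) (by nlinarith) hβ0.le
        have h3 : ((8:ℝ)*ξ^2)^β = 8^β * (ξ^2)^β := Real.mul_rpow (by norm_num) (by positivity)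
        have h4 : (8:ℝ)^β ≤ 8 := by
          calc (8:ℝ)^β ≤ (8:ℝ)^(1:ℝ) :=
                Real.rpow_le_rpow_of_exponent_le (by norm_num) (by rw [hβdef]; linarith)
            _ = 8 := Real.rpow_one 8
        have h5 : ((ξ^2 : ℝ))^β = ξ^(2*β) := by
          rw [← Real.rpow_natCast ξ 2, ← Real.rpow_mul hξ0.le]; norm_num
        have h6 : ξ^(2*β) = ξ^2 * ξ^(-α) := by
          rw [show 2*β = 2 + (-α) by rw [hβdef]; ring, Real.rpow_add hξ0,
            show ((2:ℝ) = ((2:ℕ):ℝ)) by norm_num, Real.rpow_natCast]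
        calc Real.exp (β*L) = (4*(1+ξ^2))^β := h1
          _ ≤ (8*ξ^2)^β := h2
          _ = 8^β*((ξ^2:ℝ))^β := h3
          _ ≤ 8 * (ξ^2*ξ^(-α)) := by
              rw [h5, h6]; exact mul_le_mul_of_nonneg_right h4 (by positivity)
      have hEsq : E*E = Real.exp (β*L) := by rw [hEdef, ← Real.exp_add]; congr 1; ring
      rw [hEe, hE02]
      have step0 : (E - 1)/(β/2) = (2/β)*(E-1) := by field_simp
      have step1 : (E - 1)/(β/2) ≤ (2/β)*E := by
        rw [step0]; exact mul_le_mul_of_nonneg_left (by linarith) (by positivity)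
      calc (2/(β*ξ^2))*E*((E - 1)/(β/2)) ≤ (2/(β*ξ^2))*E*((2/β)*E) := by
            exact mul_le_mul_of_nonneg_left step1 (by positivity)
        _ = (4/β^2)*((E*E)/ξ^2) := by field_simp; ring
        _ ≤ (4/β^2)*((8*(ξ^2*ξ^(-α)))/ξ^2) := by
            apply mul_le_mul_of_nonneg_left _ (by positivity)
            apply div_le_div_of_nonneg_right ?_ (by positivity)
            · rw [hEsq] at *; exact hexpL
        _ = (32/β^2)*ξ^(-α) := by field_simp; ring
    rw [hsplit, e1, e2, e3] at hmono
    have hCexp : (32/α^2 + 4/β + 32/β^2)*ξ^(-α)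
        = 32/α^2*ξ^(-α) + (4/β)*ξ^(-α) + (32/β^2)*ξ^(-α) := by ring
    linarith
  · rw [MeasureTheory.integral_undef hF]
    positivity
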